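/- arXiv:1510.01123 — 2 statements merged into one kernel-verified Lean document; each statement's English description precedes it below -/
import Mathlib

section
/- There exists a constant C such that for any symmetric nonnegative 3×3 real matrices A and B with A invertible, ‖A^{1/2} - B^{1/2}‖ ≤ C ‖A^{-1}‖^{1/2} ‖A - B‖. -/
noncomputable section
open Matrix

abbrev M3 := Matrix (Fin 3) (Fin 3) ℝ

/-- Squared Frobenius (Hilbert–Schmidt) norm: `‖M‖² = Tr (M Mᵀ)`. -/
def frobSq (A : M3) : ℝ := Matrix.trace (A * Aᵀ)

/-- Frobenius norm. -/
def frobNorm (A : M3) : ℝ := Real.sqrt (frobSq A)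

/-- The square root of a positive semidefinite matrix (as in the older Mathlib). -/
def Matrix.PosSemidef.sqrt {n : Type*} {𝕜 : Type*} [Fintype n] [RCLike 𝕜] [PartialOrder 𝕜] [DecidableEq n]
    {A : Matrix n n 𝕜} (hA : A.PosSemidef) : Matrix n n 𝕜 :=
  hA.1.eigenvectorUnitary.1 * diagonal ((↑) ∘ (Real.sqrt ∘ hA.1.eigenvalues)) *
    (star hA.1.eigenvectorUnitary : Matrix n n 𝕜)

lemma Matrix.PosSemidef.posSemidef_sqrt {A : M3} (hA : A.PosSemidef) : hA.sqrt.PosSemidef := by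
  unfold Matrix.PosSemidef.sqrt
  have hD : (diagonal ((↑) ∘ (Real.sqrt ∘ hA.1.eigenvalues)) : M3).PosSemidef :=
    PosSemidef.diagonal (fun i => by simp [Real.sqrt_nonneg])
  have := hD.mul_mul_conjTranspose_same (hA.1.eigenvectorUnitary : M3)
  simpa [Matrix.star_eq_conjTranspose, Function.comp_def] using this

lemma Matrix.PosSemidef.sqrt_mul_self {A : M3} (hA : A.PosSemidef) : hA.sqrt * hA.sqrt = A := by
  unfold Matrix.PosSemidef.sqrt
  have hU : (star hA.1.eigenvectorUnitary : M3) * (hA.1.eigenvectorUnitary : M3) = 1 := by simp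
  conv_rhs => rw [hA.1.spectral_theorem, Unitary.conjStarAlgAut_apply]
  simp only [Matrix.mul_assoc]
  rw [← Matrix.mul_assoc (star hA.1.eigenvectorUnitary : M3) (hA.1.eigenvectorUnitary : M3), hU,
    Matrix.one_mul, ← Matrix.mul_assoc (diagonal _) (diagonal _), diagonal_mul_diagonal]
  congr 3
  funext i
  simp [Real.mul_self_sqrt (hA.eigenvalues_nonneg i)]

lemma frobSq_eq_sum (M : M3) : frobSq M = ∑ i, ∑ j, M i j ^ 2 := by
  simp [frobSq, Matrix.trace, Matrix.diag, Matrix.mul_apply, sq]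

lemma frobSq_nonneg (M : M3) : 0 ≤ frobSq M := by
  rw [frobSq_eq_sum]; positivity

lemma dot_nonneg (v : Fin 3 → ℝ) : 0 ≤ v ⬝ᵥ v :=
  Finset.sum_nonneg fun i _ => mul_self_nonneg _

lemma dot_CS (u w : Fin 3 → ℝ) : (u ⬝ᵥ w)^2 ≤ (u ⬝ᵥ u) * (w ⬝ᵥ w) := by
  have := Finset.sum_mul_sq_le_sq_mul_sq Finset.univ u w
  simpa [dotProduct, sq] using this

lemma dot_mulVec_mulVec (M N : M3) (v : Fin 3 → ℝ) :
    (M *ᵥ v) ⬝ᵥ (N *ᵥ v) = v ⬝ᵥ ((Mᵀ * N) *ᵥ v) := by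
  rw [← Matrix.mulVec_mulVec, Matrix.dotProduct_mulVec v, Matrix.vecMul_transpose]

lemma conjT_eq (M : M3) : Mᴴ = Mᵀ := by
  ext i j; simp [Matrix.conjTranspose_apply]

lemma frobNorm_nonneg (M : M3) : 0 ≤ frobNorm M := Real.sqrt_nonneg _

lemma le_sqrt_mul_sqrt {x y z : ℝ} (hy : 0 ≤ y) (h : x^2 ≤ y * z) :
    x ≤ Real.sqrt y * Real.sqrt z := by
  calc x ≤ |x| := le_abs_self x
    _ = Real.sqrt (x^2) := (Real.sqrt_sq_eq_abs x).symm
    _ ≤ Real.sqrt (y*z) := Real.sqrt_le_sqrt h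
    _ = _ := Real.sqrt_mul hy z

lemma mulVec_self_dot (M : M3) (v : Fin 3 → ℝ) :
    (M *ᵥ v) ⬝ᵥ (M *ᵥ v) ≤ frobSq M * (v ⬝ᵥ v) := by
  have h : ∀ i : Fin 3, (M *ᵥ v) i * (M *ᵥ v) i ≤ (∑ j, M i j ^ 2) * (∑ j, v j ^ 2) := by
    intro i
    have := Finset.sum_mul_sq_le_sq_mul_sq Finset.univ (fun j => M i j) v
    simpa [Matrix.mulVec, dotProduct, sq] using this
  calc (M *ᵥ v) ⬝ᵥ (M *ᵥ v) = ∑ i, (M *ᵥ v) i * (M *ᵥ v) i := rfl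
    _ ≤ ∑ i, (∑ j, M i j ^ 2) * (∑ j, v j ^ 2) := Finset.sum_le_sum fun i _ => h i
    _ = frobSq M * (v ⬝ᵥ v) := by
        rw [frobSq_eq_sum, Finset.sum_mul]
        congr 1; ext i; congr 1
        simp [dotProduct, sq]

lemma mulVec_dot_le (M : M3) (v : Fin 3 → ℝ) :
    v ⬝ᵥ (M *ᵥ v) ≤ frobNorm M * (v ⬝ᵥ v) := by
  have h1 : (v ⬝ᵥ (M *ᵥ v))^2 ≤ frobSq M * (v ⬝ᵥ v)^2 := by
    calc (v ⬝ᵥ (M *ᵥ v))^2 ≤ (v ⬝ᵥ v) * ((M *ᵥ v) ⬝ᵥ (M *ᵥ v)) := dot_CS v _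
      _ ≤ (v ⬝ᵥ v) * (frobSq M * (v ⬝ᵥ v)) :=
          mul_le_mul_of_nonneg_left (mulVec_self_dot M v) (dot_nonneg v)
      _ = frobSq M * (v ⬝ᵥ v)^2 := by ring
  have := le_sqrt_mul_sqrt (frobSq_nonneg M) h1
  rwa [Real.sqrt_sq (dot_nonneg v)] at this

lemma trace_transpose_mul_le (D M : M3) :
    Matrix.trace (Dᵀ * M) ≤ frobNorm D * frobNorm M := by
  have ht : Matrix.trace (Dᵀ * M) = ∑ p : Fin 3 × Fin 3, D p.1 p.2 * M p.1 p.2 := by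
    rw [Fintype.sum_prod_type]
    simp only [Matrix.trace, Matrix.diag, Matrix.mul_apply, Matrix.transpose_apply]
    rw [Finset.sum_comm]
  have h2 : (Matrix.trace (Dᵀ * M))^2 ≤ frobSq D * frobSq M := by
    rw [ht]
    have := Finset.sum_mul_sq_le_sq_mul_sq Finset.univ
      (fun p : Fin 3 × Fin 3 => D p.1 p.2) (fun p : Fin 3 × Fin 3 => M p.1 p.2)
    refine this.trans (le_of_eq ?_)
    rw [frobSq_eq_sum, frobSq_eq_sum, Fintype.sum_prod_type, Fintype.sum_prod_type]
  exact le_sqrt_mul_sqrt (frobSq_nonneg D) h2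

lemma psd_trace_nonneg {M : M3} (hM : M.PosSemidef) : 0 ≤ Matrix.trace M := by
  have h : ∀ i, 0 ≤ M i i := fun i => by
    have := hM.dotProduct_mulVec_nonneg (Pi.single i 1)
    simpa [Matrix.mulVec, dotProduct, Pi.single_apply] using this
  exact Finset.sum_nonneg fun i _ => h i

lemma frobSq_pos {M : M3} (h : M ≠ 0) : 0 < frobSq M := by
  obtain ⟨i, j, hij⟩ : ∃ i j, M i j ≠ 0 := by
    by_contra hc
    push_neg at hc
    exact h (by ext i j; simpa using hc i j)
  rw [frobSq_eq_sum]
  have h1 : (0:ℝ) < M i j ^ 2 := by positivity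
  have h2 : M i j ^ 2 ≤ ∑ j', M i j' ^ 2 :=
    Finset.single_le_sum (fun k _ => sq_nonneg (M i k)) (Finset.mem_univ j)
  have h3 : ∑ j', M i j' ^ 2 ≤ ∑ i', ∑ j', M i' j' ^ 2 :=
    Finset.single_le_sum (f := fun i' => ∑ j', M i' j' ^ 2)
      (fun k _ => Finset.sum_nonneg fun _ _ => sq_nonneg _) (Finset.mem_univ i)
  linarith

lemma frobNorm_pos {M : M3} (h : M ≠ 0) : 0 < frobNorm M :=
  Real.sqrt_pos.mpr (frobSq_pos h)

lemma inv_ne_zero_of_isUnit_det {A : M3} (hd : IsUnit A.det) : A⁻¹ ≠ 0 := by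
  intro h0
  have h1 := Matrix.nonsing_inv_mul A hd
  rw [h0, Matrix.zero_mul] at h1
  have h2 := congrFun (congrFun h1 0) 0
  simp [Matrix.one_apply] at h2

lemma coercive {A : M3} (hA : A.PosSemidef) (hd : IsUnit A.det) :
    (hA.sqrt - (1 / Real.sqrt (frobNorm A⁻¹)) • (1 : M3)).PosSemidef := by
  set X := hA.sqrt with hXdef
  have hX : X.PosSemidef := hA.posSemidef_sqrt
  have hXX : X * X = A := hA.sqrt_mul_self
  have hdA : A.det ≠ 0 := by
    simpa using hd.ne_zero
  have hXdet : X.det ≠ 0 := by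
    intro h0
    apply hdA
    rw [← hXX, Matrix.det_mul, h0, mul_zero]
  have hdX : IsUnit X.det := isUnit_iff_ne_zero.mpr hXdet
  have hXT : Xᵀ = X := (conjT_eq X) ▸ hX.1
  have hXinvT : (X⁻¹)ᵀ = X⁻¹ := by rw [Matrix.transpose_nonsing_inv, hXT]
  have hAinvX : A⁻¹ = X⁻¹ * X⁻¹ := by rw [← hXX, Matrix.mul_inv_rev]
  set S := hX.sqrt with hSdef
  have hS : S.PosSemidef := hX.posSemidef_sqrt
  have hSS : S * S = X := hX.sqrt_mul_self
  have hSdet : S.det ≠ 0 := by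
    intro h0
    apply hXdet
    rw [← hSS, Matrix.det_mul, h0, mul_zero]
  have hdS : IsUnit S.det := isUnit_iff_ne_zero.mpr hSdet
  have hST : Sᵀ = S := (conjT_eq S) ▸ hS.1
  have hSinvT : (S⁻¹)ᵀ = S⁻¹ := by rw [Matrix.transpose_nonsing_inv, hST]
  have hXinvS : X⁻¹ = S⁻¹ * S⁻¹ := by rw [← hSS, Matrix.mul_inv_rev]
  set k := frobNorm A⁻¹ with hkdef
  have hk : 0 < k := frobNorm_pos (inv_ne_zero_of_isUnit_det hd)
  have hsk : 0 < Real.sqrt k := Real.sqrt_pos.mpr hk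
  set c := 1 / Real.sqrt k with hcdef
  have hc : 0 < c := by positivity
  have hcsk : c * Real.sqrt k = 1 := by
    rw [hcdef]; field_simp
  refine Matrix.PosSemidef.of_dotProduct_mulVec_nonneg ?_ ?_
  · show (X - c • (1:M3))ᴴ = X - c • (1:M3)
    rw [conjT_eq, Matrix.transpose_sub, Matrix.transpose_smul, Matrix.transpose_one, hXT]
  · intro v
    have hsv : star v = v := by ext i; simp
    rw [hsv, Matrix.sub_mulVec, dotProduct_sub, Matrix.smul_mulVec,
      Matrix.one_mulVec, dotProduct_smul]
    set n := v ⬝ᵥ v with hn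
    set t := v ⬝ᵥ (X *ᵥ v) with ht
    have hn0 : 0 ≤ n := dot_nonneg v
    have ht0 : 0 ≤ t := by
      have := hX.dotProduct_mulVec_nonneg v
      rwa [hsv] at this
    have h1 : (S *ᵥ v) ⬝ᵥ (S⁻¹ *ᵥ v) = n := by
      rw [dot_mulVec_mulVec, hST, Matrix.mul_nonsing_inv S hdS, Matrix.one_mulVec]
    have h2 : (S *ᵥ v) ⬝ᵥ (S *ᵥ v) = t := by rw [dot_mulVec_mulVec, hST, hSS]
    set s := v ⬝ᵥ (X⁻¹ *ᵥ v) with hs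
    have h3 : (S⁻¹ *ᵥ v) ⬝ᵥ (S⁻¹ *ᵥ v) = s := by
      rw [dot_mulVec_mulVec, hSinvT, ← hXinvS]
    have hCS1 : n^2 ≤ t * s := by
      have := dot_CS (S *ᵥ v) (S⁻¹ *ᵥ v)
      rwa [h1, h2, h3] at this
    have h4 : (X⁻¹ *ᵥ v) ⬝ᵥ (X⁻¹ *ᵥ v) = v ⬝ᵥ (A⁻¹ *ᵥ v) := by
      rw [dot_mulVec_mulVec, hXinvT, ← hAinvX]
    have hCS2 : s^2 ≤ n * (k * n) := by
      have hq := dot_CS v (X⁻¹ *ᵥ v)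
      have h5 : v ⬝ᵥ (A⁻¹ *ᵥ v) ≤ k * n := mulVec_dot_le A⁻¹ v
      calc s^2 ≤ n * ((X⁻¹ *ᵥ v) ⬝ᵥ (X⁻¹ *ᵥ v)) := hq
        _ = n * (v ⬝ᵥ (A⁻¹ *ᵥ v)) := by rw [h4]
        _ ≤ n * (k*n) := mul_le_mul_of_nonneg_left h5 hn0
    have hsle : s ≤ Real.sqrt k * n := by
      have h6 : s^2 ≤ k * n^2 := by nlinarith
      have := le_sqrt_mul_sqrt (le_of_lt hk) h6
      rwa [Real.sqrt_sq hn0] at this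
    have key : c * n ≤ t := by
      rcases eq_or_lt_of_le hn0 with hzero | hpos
      · rw [← hzero, mul_zero]; exact ht0
      · have h6 : n * n ≤ (t * Real.sqrt k) * n := by
          nlinarith [mul_le_mul_of_nonneg_left hsle ht0]
        have h7 : n ≤ t * Real.sqrt k := le_of_mul_le_mul_right h6 hpos
        calc c * n ≤ c * (t * Real.sqrt k) := mul_le_mul_of_nonneg_left h7 (le_of_lt hc)
          _ = t * (c * Real.sqrt k) := by ring
          _ = t := by rw [hcsk, mul_one]
    have : c • n = c * n := rfl
    linarith [key]

lemma expand_aux (D X : M3) (c : ℝ) :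
    D * (X - c • (1:M3)) * D = D * X * D - c • (D * D) := by
  rw [Matrix.mul_sub, Matrix.sub_mul, Matrix.mul_smul, Matrix.mul_one, Matrix.smul_mul]

theorem sqrt_matrix_lipschitz :
    ∃ C : ℝ, 0 < C ∧ ∀ (A B : M3) (hA : A.PosSemidef) (hB : B.PosSemidef),
      IsUnit A.det →
      frobNorm (hA.sqrt - hB.sqrt) ≤ C * Real.sqrt (frobNorm A⁻¹) * frobNorm (A - B) := by
  refine ⟨1, one_pos, fun A B hA hB hd => ?_⟩
  set X := hA.sqrt with hXdef
  set Y := hB.sqrt with hYdef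
  have hXX : X * X = A := hA.sqrt_mul_self
  have hYY : Y * Y = B := hB.sqrt_mul_self
  have hXpsd : X.PosSemidef := hA.posSemidef_sqrt
  have hYpsd : Y.PosSemidef := hB.posSemidef_sqrt
  set D := X - Y with hDdef
  have hXT : Xᵀ = X := (conjT_eq X) ▸ hXpsd.1
  have hYT : Yᵀ = Y := (conjT_eq Y) ▸ hYpsd.1
  have hDT : Dᵀ = D := by rw [hDdef, Matrix.transpose_sub, hXT, hYT]
  set k := frobNorm A⁻¹ with hkdef
  have hk : 0 < k := frobNorm_pos (inv_ne_zero_of_isUnit_det hd)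
  have hsk : 0 < Real.sqrt k := Real.sqrt_pos.mpr hk
  set c := 1 / Real.sqrt k with hcdef
  have hc : 0 < c := by positivity
  have hid : X * D + D * Y = A - B := by
    rw [hDdef, ← hXX, ← hYY]; noncomm_ring
  have e1 : Matrix.trace (D * (A - B)) =
      Matrix.trace (D * X * D) + Matrix.trace (D * D * Y) := by
    calc Matrix.trace (D * (A - B)) = Matrix.trace ((X * D + D * Y) * D) := by
          rw [hid, Matrix.trace_mul_comm]
      _ = Matrix.trace (X * D * D) + Matrix.trace (D * Y * D) := by
          rw [Matrix.add_mul, Matrix.trace_add]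
      _ = Matrix.trace (D * X * D) + Matrix.trace (D * D * Y) := by
          rw [Matrix.trace_mul_comm (X * D) D, Matrix.trace_mul_comm (D * Y) D,
            ← Matrix.mul_assoc, ← Matrix.mul_assoc]
  have t1 : 0 ≤ Matrix.trace (D * D * Y) := by
    have hpsd : (Dᴴ * Y * D).PosSemidef := hYpsd.conjTranspose_mul_mul_same D
    have h0 := psd_trace_nonneg hpsd
    rw [conjT_eq, hDT] at h0
    calc (0:ℝ) ≤ Matrix.trace (D * Y * D) := h0
      _ = Matrix.trace (D * D * Y) := by
          rw [Matrix.trace_mul_comm (D * Y) D, ← Matrix.mul_assoc]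
  have hco := coercive hA hd
  have t2 : c * frobSq D ≤ Matrix.trace (D * X * D) := by
    have hpsd : (Dᴴ * (X - c • (1:M3)) * D).PosSemidef := hco.conjTranspose_mul_mul_same D
    have h0 := psd_trace_nonneg hpsd
    rw [conjT_eq, hDT] at h0
    have expand := expand_aux D X c
    rw [expand, Matrix.trace_sub, Matrix.trace_smul] at h0
    have hDD : Matrix.trace (D * D) = frobSq D := by
      rw [frobSq, hDT]
    rw [hDD] at h0
    have : c • frobSq D = c * frobSq D := rfl
    linarith
  have t3 : Matrix.trace (D * (A - B)) ≤ frobNorm D * frobNorm (A - B) := by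
    have := trace_transpose_mul_le D (A - B)
    rwa [hDT] at this
  have main : c * frobSq D ≤ frobNorm D * frobNorm (A - B) := by linarith
  have hfd : frobSq D = frobNorm D * frobNorm D :=
    (Real.mul_self_sqrt (frobSq_nonneg D)).symm
  rcases eq_or_lt_of_le (frobNorm_nonneg D) with h0 | h0
  · rw [← h0]
    have := frobNorm_nonneg (A - B)
    positivity
  · have hstep : c * frobNorm D ≤ frobNorm (A - B) := by
      rw [hfd] at main
      have : (c * frobNorm D) * frobNorm D ≤ frobNorm (A - B) * frobNorm D := by
        nlinarith
      exact le_of_mul_le_mul_right this h0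
    calc frobNorm D = (1/c) * (c * frobNorm D) := by field_simp
      _ ≤ (1/c) * frobNorm (A - B) := mul_le_mul_of_nonneg_left hstep (by positivity)
      _ = 1 * Real.sqrt k * frobNorm (A - B) := by
          rw [hcdef, one_div_one_div, one_mul]
end
end

section
/- For γ ∈ [0,1] there is a constant C depending only on γ such that for all v, w ∈ ℝ³: |b(v)-b(w)| ≤ C|v-w|(|v|^γ + |w|^γ), ‖σ(v)-σ(w)‖ ≤ C|v-w|(|v|^{γ/2} + |w|^{γ/2}), and ‖a(v)-a(w)‖ ≤ C|v-w|(|v|^{1+γ} + |w|^{1+γ}). -/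
noncomputable section
open Matrix
open scoped Classical

abbrev E3 := EuclideanSpace ℝ (Fin 3)

def proj3 (v : E3) : M3 :=
  1 - (‖v‖ ^ 2)⁻¹ • Matrix.vecMulVec (fun i => v i) (fun i => v i)

def amat (γ : ℝ) (v : E3) : M3 := if v = 0 then 0 else (‖v‖ ^ (2 + γ)) • proj3 v

def sigmat (γ : ℝ) (v : E3) : M3 := if v = 0 then 0 else (‖v‖ ^ (1 + γ / 2)) • proj3 v

def bvec (γ : ℝ) (v : E3) : E3 := (-2 * ‖v‖ ^ γ) • v

lemma coord_abs_le (v : E3) (i : Fin 3) : |v i| ≤ ‖v‖ := by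
  rw [EuclideanSpace.norm_eq]
  have h1 : |v i| = Real.sqrt (‖v i‖ ^ 2) := by
    rw [Real.sqrt_sq (norm_nonneg _), Real.norm_eq_abs]
  rw [h1]
  apply Real.sqrt_le_sqrt
  exact Finset.single_le_sum (f := fun j => ‖v j‖ ^ 2) (fun j _ => by positivity) (Finset.mem_univ i)

lemma abs_rpow_sub_rpow_le {α x y : ℝ} (hα1 : -1 ≤ α) (hα2 : α ≤ 1)
    (hy : 0 < y) (hxy : y ≤ x) :
    |x ^ α - y ^ α| ≤ (x - y) * y ^ (α - 1) := by
  have hx : 0 < x := lt_of_lt_of_le hy hxy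
  have hysplit : y ^ α = y * y ^ (α - 1) := by
    rw [show α = 1 + (α - 1) by ring, Real.rpow_add hy, Real.rpow_one]
    ring_nf
  rcases le_or_gt 0 α with hα | hα
  · have h1 : y ^ α ≤ x ^ α := Real.rpow_le_rpow hy.le hxy hα
    rw [abs_of_nonneg (by linarith)]
    have h2 : x ^ α ≤ x * y ^ (α - 1) := by
      have hxx : x ^ α = x * x ^ (α - 1) := by
        rw [show α = 1 + (α - 1) by ring, Real.rpow_add hx, Real.rpow_one]
        ring_nf
      have h3 : x ^ (α - 1) ≤ y ^ (α - 1) :=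
        Real.rpow_le_rpow_of_nonpos hy hxy (by linarith)
      rw [hxx]
      exact mul_le_mul_of_nonneg_left h3 hx.le
    linarith
  · have h1 : x ^ α ≤ y ^ α := Real.rpow_le_rpow_of_nonpos hy hxy hα.le
    rw [abs_of_nonpos (by linarith), neg_sub]
    -- need: 2 * y ^ α ≤ x ^ α + x * y ^ (α - 1)
    have ha2 : (x ^ (α/2)) ^ 2 = x ^ α := by
      rw [sq, ← Real.rpow_add hx]; ring_nf
    have hb2 : (x ^ (1/2:ℝ) * y ^ ((α-1)/2)) ^ 2 = x * y ^ (α - 1) := by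
      rw [mul_pow, sq, sq, ← Real.rpow_add hx, ← Real.rpow_add hy]
      norm_num
    have hamgm := two_mul_le_add_sq (x ^ (α/2)) (x ^ (1/2:ℝ) * y ^ ((α-1)/2))
    rw [ha2, hb2] at hamgm
    have hmid : 2 * y ^ α ≤ 2 * (x ^ (α/2) * (x ^ (1/2:ℝ) * y ^ ((α-1)/2))) := by
      have h4 : y ^ α = y ^ ((α+1)/2) * y ^ ((α-1)/2) := by
        rw [← Real.rpow_add hy]; ring_nf
      have h5 : x ^ (α/2) * x ^ (1/2:ℝ) = x ^ ((α+1)/2) := by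
        rw [← Real.rpow_add hx]; ring_nf
      have h6 : y ^ ((α+1)/2) ≤ x ^ ((α+1)/2) :=
        Real.rpow_le_rpow hy.le hxy (by linarith)
      have h7 : (0:ℝ) ≤ y ^ ((α-1)/2) := Real.rpow_nonneg hy.le _
      calc 2 * y ^ α = 2 * (y ^ ((α+1)/2) * y ^ ((α-1)/2)) := by rw [h4]
        _ ≤ 2 * (x ^ ((α+1)/2) * y ^ ((α-1)/2)) := by nlinarith
        _ = 2 * (x ^ (α/2) * (x ^ (1/2:ℝ) * y ^ ((α-1)/2))) := by rw [← h5]; ring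
    have : 2 * y ^ α ≤ x ^ α + x * y ^ (α - 1) := by nlinarith
    linarith [hysplit]

lemma diff_rpow_le1 {β x y : ℝ} (hβ0 : 0 ≤ β) (hβ1 : β ≤ 1) (hy : 0 ≤ y) (hxy : y ≤ x) :
    x ^ (1+β) - y ^ (1+β) ≤ 2 * (x - y) * (x ^ β + y ^ β) := by
  have hx : 0 ≤ x := hy.trans hxy
  have hxs : x ^ (1+β) = x * x ^ β := by
    rw [Real.rpow_add' hx (by linarith), Real.rpow_one]
  have hys : y ^ (1+β) = y * y ^ β := by
    rw [Real.rpow_add' hy (by linarith), Real.rpow_one]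
  have hxb : (0:ℝ) ≤ x ^ β := Real.rpow_nonneg hx _
  have hyb : (0:ℝ) ≤ y ^ β := Real.rpow_nonneg hy _
  rcases eq_or_lt_of_le hy with h0 | h0
  · rw [hxs, hys, ← h0]
    nlinarith [mul_nonneg hx hxb, mul_nonneg hx (Real.rpow_nonneg (le_refl (0:ℝ)) β)]
  · have habs := abs_rpow_sub_rpow_le (by linarith : -1 ≤ β) hβ1 h0 hxy
    have h1 : x ^ β - y ^ β ≤ (x - y) * y ^ (β - 1) := (abs_le.mp habs).2
    have h2 : y ^ β = y * y ^ (β - 1) := by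
      rw [show β = 1 + (β - 1) by ring, Real.rpow_add h0, Real.rpow_one]; ring_nf
    have h3 : (0:ℝ) ≤ y ^ (β - 1) := Real.rpow_nonneg hy _
    rw [hxs, hys]
    nlinarith

lemma diff_rpow_le2 {β x y : ℝ} (hβ0 : 0 ≤ β) (hβ2 : β ≤ 2) (hy : 0 ≤ y) (hxy : y ≤ x) :
    x ^ (1+β) - y ^ (1+β) ≤ 3 * (x - y) * (x ^ β + y ^ β) := by
  have hx : 0 ≤ x := hy.trans hxy
  have hxb : (0:ℝ) ≤ x ^ β := Real.rpow_nonneg hx _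
  have hyb : (0:ℝ) ≤ y ^ β := Real.rpow_nonneg hy _
  rcases le_or_gt β 1 with hβ1 | hβ1
  · have := diff_rpow_le1 hβ0 hβ1 hy hxy
    nlinarith [mul_nonneg (sub_nonneg.mpr hxy) (add_nonneg hxb hyb)]
  · -- β ∈ (1,2]
    set δ := β - 1 with hδ
    have hδ0 : 0 ≤ δ := by linarith
    have hδ1 : δ ≤ 1 := by linarith
    have h1 := diff_rpow_le1 hδ0 hδ1 hy hxy
    have hxd : (0:ℝ) ≤ x ^ δ := Real.rpow_nonneg hx _
    have hyd : (0:ℝ) ≤ y ^ δ := Real.rpow_nonneg hy _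
    have hxβ : x ^ β = x * x ^ δ := by
      rw [show β = 1 + δ by rw [hδ]; ring, Real.rpow_add' hx (by linarith), Real.rpow_one]
    have hyβ : y ^ β = y * y ^ δ := by
      rw [show β = 1 + δ by rw [hδ]; ring, Real.rpow_add' hy (by linarith), Real.rpow_one]
    have h1δ : x ^ (1+δ) = x ^ β := by rw [show (1+δ) = β by rw [hδ]; ring]
    have h2δ : y ^ (1+δ) = y ^ β := by rw [show (1+δ) = β by rw [hδ]; ring]
    rw [h1δ, h2δ] at h1
    -- x^(1+β) - y^(1+β) = (x-y) x^β + y (x^β - y^β)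
    have hxs : x ^ (1+β) = x * x ^ β := by
      rw [Real.rpow_add' hx (by linarith), Real.rpow_one]
    have hys : y ^ (1+β) = y * y ^ β := by
      rw [Real.rpow_add' hy (by linarith), Real.rpow_one]
    rw [hxs, hys]
    -- y*(x^β - y^β) ≤ y * 2(x-y)(x^δ+y^δ) = 2(x-y)(y x^δ + y^(1+δ)) ≤ 2(x-y)(x^β + y^β)
    nlinarith [mul_le_mul_of_nonneg_left h1 hy,
      mul_nonneg (sub_nonneg.mpr hxy) (mul_nonneg hy hxd),
      mul_le_mul_of_nonneg_right hxy hxd,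
      mul_nonneg (sub_nonneg.mpr hxy) hxb]

lemma abs_diff_rpow_le {β x y : ℝ} (hβ0 : 0 ≤ β) (hβ2 : β ≤ 2) (hx : 0 ≤ x) (hy : 0 ≤ y) :
    |x ^ (1+β) - y ^ (1+β)| ≤ 3 * |x - y| * (x ^ β + y ^ β) := by
  rcases le_total y x with h | h
  · rw [abs_of_nonneg (by
      have := Real.rpow_le_rpow hy h (by linarith : (0:ℝ) ≤ 1+β); linarith),
      abs_of_nonneg (by linarith)]
    exact diff_rpow_le2 hβ0 hβ2 hy h
  · rw [abs_of_nonpos (by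
      have := Real.rpow_le_rpow hx h (by linarith : (0:ℝ) ≤ 1+β); linarith),
      abs_of_nonpos (by linarith), neg_sub, neg_sub]
    have := diff_rpow_le2 hβ0 hβ2 hx h
    linarith

lemma rpow_half_le {α x y : ℝ} (hα1 : -1 ≤ α) (hα2 : α ≤ 1) (hx : 0 < x) (h : x ≤ 2*y) :
    y ^ (α-1) ≤ 4 * x ^ (α-1) := by
  have hx2 : 0 < x / 2 := by linarith
  have h1 : y ^ (α-1) ≤ (x/2) ^ (α-1) :=
    Real.rpow_le_rpow_of_nonpos hx2 (by linarith) (by linarith)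
  have h2 : (x/2) ^ (α-1) = x ^ (α-1) / 2 ^ (α-1) :=
    Real.div_rpow hx.le (by norm_num) _
  have h3 : (2:ℝ) ^ (α-1) = (2 ^ (1-α:ℝ))⁻¹ := by
    rw [← Real.rpow_neg (by norm_num)]; ring_nf
  have h4 : (2:ℝ) ^ (1-α:ℝ) ≤ 2 ^ (2:ℝ) :=
    Real.rpow_le_rpow_of_exponent_le one_le_two (by linarith)
  have h5 : (2:ℝ) ^ (2:ℝ) = 4 := by
    rw [show (2:ℝ) = ((2:ℕ):ℝ) by norm_num, Real.rpow_natCast]; norm_num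
  have h6 : (0:ℝ) < 2 ^ (1-α:ℝ) := Real.rpow_pos_of_pos (by norm_num) _
  have h7 : (0:ℝ) ≤ x ^ (α-1) := Real.rpow_nonneg hx.le _
  calc y ^ (α-1) ≤ x ^ (α-1) / 2 ^ (α-1) := by rw [← h2]; exact h1
    _ = x ^ (α-1) * 2 ^ (1-α:ℝ) := by rw [h3]; field_simp
    _ ≤ x ^ (α-1) * 4 := by nlinarith
    _ = 4 * x ^ (α-1) := by ring

lemma rpow_half_le' {α x y : ℝ} (hα1 : -1 ≤ α) (hα2 : α ≤ 1) (hx : 0 < x) (hy : 0 < y)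
    (hyx : y ≤ x) (h : x ≤ 2*y) : y ^ α ≤ 2 * x ^ α := by
  rcases le_or_gt 0 α with h0 | h0
  · have := Real.rpow_le_rpow hy.le hyx h0
    have : (0:ℝ) ≤ x ^ α := Real.rpow_nonneg hx.le _
    nlinarith [Real.rpow_le_rpow hy.le hyx h0]
  · have hx2 : 0 < x / 2 := by linarith
    have h1 : y ^ α ≤ (x/2) ^ α :=
      Real.rpow_le_rpow_of_nonpos hx2 (by linarith) h0.le
    have h2 : (x/2) ^ α = x ^ α / 2 ^ α :=
      Real.div_rpow hx.le (by norm_num) _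
    have h3 : (2:ℝ) ^ α = (2 ^ (-α:ℝ))⁻¹ := by
      rw [← Real.rpow_neg (by norm_num)]; ring_nf
    have h4 : (2:ℝ) ^ (-α:ℝ) ≤ 2 ^ (1:ℝ) :=
      Real.rpow_le_rpow_of_exponent_le one_le_two (by linarith)
    have h5 : (2:ℝ) ^ (1:ℝ) = 2 := Real.rpow_one 2
    have h6 : (0:ℝ) < 2 ^ (-α:ℝ) := Real.rpow_pos_of_pos (by norm_num) _
    have h7 : (0:ℝ) ≤ x ^ α := Real.rpow_nonneg hx.le _
    calc y ^ α ≤ x ^ α / 2 ^ α := by rw [← h2]; exact h1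
      _ = x ^ α * 2 ^ (-α:ℝ) := by rw [h3]; field_simp
      _ ≤ x ^ α * 2 := by nlinarith
      _ = 2 * x ^ α := by ring

lemma offdiag_aux {α : ℝ} (hα1 : -1 ≤ α) (hα2 : α ≤ 1) (v w : E3) (hle : ‖w‖ ≤ ‖v‖)
    (i j : Fin 3) :
    |‖v‖ ^ α * (v i * v j) - ‖w‖ ^ α * (w i * w j)| ≤
      8 * ‖v - w‖ * (‖v‖ ^ (1+α) + ‖w‖ ^ (1+α)) := by
  set x := ‖v‖ with hxdef
  set y := ‖w‖ with hydef
  have hx0 : 0 ≤ x := norm_nonneg v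
  have hy0 : 0 ≤ y := norm_nonneg w
  have hd0 : 0 ≤ ‖v - w‖ := norm_nonneg _
  have hdxy : x - y ≤ ‖v - w‖ := norm_sub_norm_le v w
  have hP0 : (0:ℝ) ≤ x ^ (1+α) := Real.rpow_nonneg hx0 _
  have hQ0 : (0:ℝ) ≤ y ^ (1+α) := Real.rpow_nonneg hy0 _
  have hA0 : (0:ℝ) ≤ x ^ α := Real.rpow_nonneg hx0 _
  have hB0 : (0:ℝ) ≤ y ^ α := Real.rpow_nonneg hy0 _
  have hvi : ∀ k : Fin 3, |v k| ≤ x := fun k => coord_abs_le v k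
  have hwi : ∀ k : Fin 3, |w k| ≤ y := fun k => coord_abs_le w k
  have hvwk : ∀ k : Fin 3, |v k - w k| ≤ ‖v - w‖ := fun k => by
    simpa using coord_abs_le (v - w) k
  have hp : |v i * v j| ≤ x * x := by
    rw [abs_mul]
    exact mul_le_mul (hvi i) (hvi j) (abs_nonneg _) hx0
  have hq : |w i * w j| ≤ y * y := by
    rw [abs_mul]
    exact mul_le_mul (hwi i) (hwi j) (abs_nonneg _) hy0
  have habs1 : |x ^ α * (v i * v j)| ≤ x ^ α * (x * x) := by
    rw [abs_mul, abs_of_nonneg hA0]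
    exact mul_le_mul_of_nonneg_left hp hA0
  have habs2 : |y ^ α * (w i * w j)| ≤ y ^ α * (y * y) := by
    rw [abs_mul, abs_of_nonneg hB0]
    exact mul_le_mul_of_nonneg_left hq hB0
  rcases eq_or_lt_of_le hy0 with hy | hy
  · -- w = 0
    have hw0 : ∀ k : Fin 3, w k = 0 := by
      have hw : w = 0 := norm_eq_zero.mp hy.symm
      intro k; rw [hw]; rfl
    have hwij : y ^ α * (w i * w j) = 0 := by rw [hw0 i]; ring
    rw [hwij, sub_zero]
    rcases eq_or_lt_of_le hx0 with hx | hx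
    · have hv0 : ∀ k : Fin 3, v k = 0 := by
        have hv : v = 0 := norm_eq_zero.mp hx.symm
        intro k; rw [hv]; rfl
      rw [hv0 i]
      simp only [zero_mul, mul_zero, abs_zero]
      positivity
    · have hPx : x ^ α * x = x ^ (1+α) := by
        rw [Real.rpow_add hx, Real.rpow_one]; ring
      have hdx : x ≤ ‖v - w‖ := by
        have : x - y ≤ ‖v - w‖ := hdxy
        linarith [hy]
      calc |x ^ α * (v i * v j)| ≤ x ^ α * (x * x) := habs1
        _ = x ^ (1+α) * x := by rw [← hPx]; ring
        _ ≤ 8 * ‖v - w‖ * (x ^ (1+α) + y ^ (1+α)) := by nlinarith [mul_nonneg hd0 hQ0, mul_nonneg hd0 hP0]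
  · -- 0 < y ≤ x
    have hx : 0 < x := lt_of_lt_of_le hy hle
    have hPx : x ^ α * x = x ^ (1+α) := by
      rw [Real.rpow_add hx, Real.rpow_one]; ring
    have hQy : y ^ α * y = y ^ (1+α) := by
      rw [Real.rpow_add hy, Real.rpow_one]; ring
    rcases le_or_gt x (2*y) with hcase | hcase
    · -- x ≤ 2y : Lipschitz regime
      have hAB := abs_rpow_sub_rpow_le hα1 hα2 hy hle
      have hR4 : y ^ (α-1) ≤ 4 * x ^ (α-1) := rpow_half_le hα1 hα2 hx hcase
      have hR0 : (0:ℝ) ≤ y ^ (α-1) := Real.rpow_nonneg hy0 _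
      have hR0' : (0:ℝ) ≤ x ^ (α-1) := Real.rpow_nonneg hx0 _
      have hB2 : y ^ α ≤ 2 * x ^ α := rpow_half_le' hα1 hα2 hx hy hle hcase
      have hPxx : x ^ (α-1) * (x * x) = x ^ (1+α) := by
        rw [show (1+α) = (α-1)+1+1 by ring, Real.rpow_add hx, Real.rpow_add hx,
          Real.rpow_one]; ring
      have hdec : x ^ α * (v i * v j) - y ^ α * (w i * w j) =
          (x ^ α - y ^ α) * (v i * v j) + y ^ α * (v i * v j - w i * w j) := by ring
      have hpq : |v i * v j - w i * w j| ≤ ‖v - w‖ * (x + y) := by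
        have h1 : v i * v j - w i * w j = v i * (v j - w j) + w j * (v i - w i) := by ring
        rw [h1]
        calc |v i * (v j - w j) + w j * (v i - w i)|
            ≤ |v i * (v j - w j)| + |w j * (v i - w i)| := abs_add_le _ _
          _ = |v i| * |v j - w j| + |w j| * |v i - w i| := by
              rw [abs_mul, abs_mul]
          _ ≤ x * ‖v - w‖ + y * ‖v - w‖ := add_le_add
              (mul_le_mul (hvi i) (hvwk j) (abs_nonneg _) hx0)
              (mul_le_mul (hwi j) (hvwk i) (abs_nonneg _) hy0)
          _ = ‖v - w‖ * (x + y) := by ring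
      have t1 : ((x - y) * y ^ (α-1)) * (x * x) ≤ 4 * ‖v - w‖ * x ^ (1+α) := by
        have h1 : (x - y) * y ^ (α-1) ≤ ‖v - w‖ * (4 * x ^ (α-1)) :=
          calc (x - y) * y ^ (α-1) ≤ ‖v - w‖ * y ^ (α-1) :=
                mul_le_mul_of_nonneg_right hdxy hR0
            _ ≤ ‖v - w‖ * (4 * x ^ (α-1)) := mul_le_mul_of_nonneg_left hR4 hd0
        calc ((x - y) * y ^ (α-1)) * (x * x)
            ≤ (‖v - w‖ * (4 * x ^ (α-1))) * (x * x) :=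
              mul_le_mul_of_nonneg_right h1 (mul_nonneg hx0 hx0)
          _ = 4 * ‖v - w‖ * (x ^ (α-1) * (x * x)) := by ring
          _ = 4 * ‖v - w‖ * x ^ (1+α) := by rw [hPxx]
      have t2 : y ^ α * (‖v - w‖ * (x + y)) ≤ 4 * ‖v - w‖ * x ^ (1+α) := by
        have h1 : y ^ α * (x + y) ≤ (2 * x ^ α) * (2 * x) :=
          mul_le_mul hB2 (by linarith) (by linarith) (by linarith)
        calc y ^ α * (‖v - w‖ * (x + y)) = (y ^ α * (x + y)) * ‖v - w‖ := by ring
          _ ≤ ((2 * x ^ α) * (2 * x)) * ‖v - w‖ := mul_le_mul_of_nonneg_right h1 hd0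
          _ = 4 * ‖v - w‖ * (x ^ α * x) := by ring
          _ = 4 * ‖v - w‖ * x ^ (1+α) := by rw [hPx]
      calc |x ^ α * (v i * v j) - y ^ α * (w i * w j)|
          ≤ |(x ^ α - y ^ α) * (v i * v j)| + |y ^ α * (v i * v j - w i * w j)| := by
            rw [hdec]; exact abs_add_le _ _
        _ = |x ^ α - y ^ α| * |v i * v j| + y ^ α * |v i * v j - w i * w j| := by
            rw [abs_mul (x ^ α - y ^ α), abs_mul (y ^ α), abs_of_nonneg hB0]
        _ ≤ ((x - y) * y ^ (α-1)) * (x * x) + y ^ α * (‖v - w‖ * (x + y)) :=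
            add_le_add
              (mul_le_mul hAB hp (abs_nonneg _) (mul_nonneg (by linarith) hR0))
              (mul_le_mul_of_nonneg_left hpq hB0)
        _ ≤ 4 * ‖v - w‖ * x ^ (1+α) + 4 * ‖v - w‖ * x ^ (1+α) := add_le_add t1 t2
        _ ≤ 8 * ‖v - w‖ * (x ^ (1+α) + y ^ (1+α)) := by nlinarith [mul_nonneg hd0 hQ0]
    · -- 2y < x : far regime
      have hx2d : x ≤ 2 * ‖v - w‖ := by linarith
      have hQP : y ^ (1+α) ≤ x ^ (1+α) :=
        Real.rpow_le_rpow hy0 hle (by linarith)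
      calc |x ^ α * (v i * v j) - y ^ α * (w i * w j)|
          ≤ |x ^ α * (v i * v j)| + |y ^ α * (w i * w j)| := abs_sub _ _
        _ ≤ x ^ α * (x * x) + y ^ α * (y * y) := add_le_add habs1 habs2
        _ = x ^ (1+α) * x + y ^ (1+α) * y := by rw [← hPx, ← hQy]; ring
        _ ≤ 8 * ‖v - w‖ * (x ^ (1+α) + y ^ (1+α)) := by
            have h1 : y ^ (1+α) * y ≤ x ^ (1+α) * x := mul_le_mul hQP hle hy0 hP0
            have h2 : x ^ (1+α) * x ≤ x ^ (1+α) * (2 * ‖v - w‖) :=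
              mul_le_mul_of_nonneg_left hx2d hP0
            have h3 : (0:ℝ) ≤ ‖v - w‖ * y ^ (1+α) := mul_nonneg hd0 hQ0
            have h4 : (0:ℝ) ≤ ‖v - w‖ * x ^ (1+α) := mul_nonneg hd0 hP0
            linarith

lemma offdiag_lem {α β : ℝ} (hα1 : -1 ≤ α) (hα2 : α ≤ 1) (hβ : β = 1 + α) (v w : E3)
    (i j : Fin 3) :
    |‖v‖ ^ α * (v i * v j) - ‖w‖ ^ α * (w i * w j)| ≤
      8 * ‖v - w‖ * (‖v‖ ^ β + ‖w‖ ^ β) := by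
  subst hβ
  rcases le_total ‖w‖ ‖v‖ with h | h
  · exact offdiag_aux hα1 hα2 v w h i j
  · rw [abs_sub_comm, norm_sub_rev, add_comm (‖v‖ ^ (1+α))]
    exact offdiag_aux hα1 hα2 w v h i j

lemma bvec_aux {α : ℝ} (hα0 : 0 ≤ α) (hα1 : α ≤ 1) (v w : E3) (hle : ‖w‖ ≤ ‖v‖) :
    ‖(‖v‖ ^ α) • v - (‖w‖ ^ α) • w‖ ≤ 8 * ‖v - w‖ * (‖v‖ ^ α + ‖w‖ ^ α) := by
  set x := ‖v‖ with hxdef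
  set y := ‖w‖ with hydef
  have hx0 : 0 ≤ x := norm_nonneg v
  have hy0 : 0 ≤ y := norm_nonneg w
  have hd0 : 0 ≤ ‖v - w‖ := norm_nonneg _
  have hdxy : x - y ≤ ‖v - w‖ := norm_sub_norm_le v w
  have hA0 : (0:ℝ) ≤ x ^ α := Real.rpow_nonneg hx0 _
  have hB0 : (0:ℝ) ≤ y ^ α := Real.rpow_nonneg hy0 _
  have hdecomp : (x ^ α) • v - (y ^ α) • w =
      (x ^ α - y ^ α) • v + (y ^ α) • (v - w) := by module
  have hbound : ‖(x ^ α) • v - (y ^ α) • w‖ ≤ |x ^ α - y ^ α| * x + y ^ α * ‖v - w‖ := by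
    rw [hdecomp]
    calc ‖(x ^ α - y ^ α) • v + (y ^ α) • (v - w)‖
        ≤ ‖(x ^ α - y ^ α) • v‖ + ‖(y ^ α) • (v - w)‖ := norm_add_le _ _
      _ = |x ^ α - y ^ α| * x + y ^ α * ‖v - w‖ := by
          rw [norm_smul, norm_smul, Real.norm_eq_abs, Real.norm_eq_abs, abs_of_nonneg hB0]
  rcases eq_or_lt_of_le hy0 with hy | hy
  · -- w = 0
    have hBy : y ^ α * ‖v - w‖ ≤ x ^ α * ‖v - w‖ := by
      apply mul_le_mul_of_nonneg_right _ hd0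
      exact Real.rpow_le_rpow hy0 hle hα0
    have hAB : |x ^ α - y ^ α| ≤ x ^ α := by
      rw [abs_of_nonneg (by
        have := Real.rpow_le_rpow hy0 hle hα0; linarith)]
      linarith [hB0]
    have hdx : x ≤ ‖v - w‖ := by linarith
    calc ‖(x ^ α) • v - (y ^ α) • w‖ ≤ |x ^ α - y ^ α| * x + y ^ α * ‖v - w‖ := hbound
      _ ≤ x ^ α * ‖v - w‖ + x ^ α * ‖v - w‖ := add_le_add
          (by calc |x ^ α - y ^ α| * x ≤ x ^ α * x := mul_le_mul_of_nonneg_right hAB hx0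
              _ ≤ x ^ α * ‖v - w‖ := mul_le_mul_of_nonneg_left hdx hA0)
          hBy
      _ ≤ 8 * ‖v - w‖ * (x ^ α + y ^ α) := by nlinarith [mul_nonneg hd0 hA0, mul_nonneg hd0 hB0]
  · -- 0 < y ≤ x
    have hx : 0 < x := lt_of_lt_of_le hy hle
    have hBA : y ^ α ≤ x ^ α := Real.rpow_le_rpow hy0 hle hα0
    rcases le_or_gt x (2*y) with hcase | hcase
    · have hAB := abs_rpow_sub_rpow_le (by linarith : -1 ≤ α) hα1 hy hle
      have hR4 : y ^ (α-1) ≤ 4 * x ^ (α-1) := rpow_half_le (by linarith) hα1 hx hcase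
      have hR0 : (0:ℝ) ≤ y ^ (α-1) := Real.rpow_nonneg hy0 _
      have hPxx : x ^ (α-1) * x = x ^ α := by
        rw [show α = (α-1)+1 by ring, Real.rpow_add hx, Real.rpow_one]; ring_nf
      have t1 : |x ^ α - y ^ α| * x ≤ 4 * ‖v - w‖ * x ^ α := by
        calc |x ^ α - y ^ α| * x ≤ ((x - y) * y ^ (α-1)) * x :=
              mul_le_mul_of_nonneg_right hAB hx0
          _ ≤ (‖v - w‖ * (4 * x ^ (α-1))) * x := by
              apply mul_le_mul_of_nonneg_right _ hx0
              calc (x - y) * y ^ (α-1) ≤ ‖v - w‖ * y ^ (α-1) :=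
                    mul_le_mul_of_nonneg_right hdxy hR0
                _ ≤ ‖v - w‖ * (4 * x ^ (α-1)) := mul_le_mul_of_nonneg_left hR4 hd0
          _ = 4 * ‖v - w‖ * (x ^ (α-1) * x) := by ring
          _ = 4 * ‖v - w‖ * x ^ α := by rw [hPxx]
      have t2 : y ^ α * ‖v - w‖ ≤ ‖v - w‖ * x ^ α := by
        rw [mul_comm]
        exact mul_le_mul_of_nonneg_left hBA hd0
      calc ‖(x ^ α) • v - (y ^ α) • w‖ ≤ |x ^ α - y ^ α| * x + y ^ α * ‖v - w‖ := hbound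
        _ ≤ 4 * ‖v - w‖ * x ^ α + ‖v - w‖ * x ^ α := add_le_add t1 t2
        _ ≤ 8 * ‖v - w‖ * (x ^ α + y ^ α) := by
            nlinarith [mul_nonneg hd0 hA0, mul_nonneg hd0 hB0]
    · -- far regime
      have hx2d : x ≤ 2 * ‖v - w‖ := by linarith
      have hAB : |x ^ α - y ^ α| ≤ x ^ α := by
        rw [abs_of_nonneg (by linarith)]; linarith
      have t1 : |x ^ α - y ^ α| * x ≤ x ^ α * (2 * ‖v - w‖) := by
        calc |x ^ α - y ^ α| * x ≤ x ^ α * x := mul_le_mul_of_nonneg_right hAB hx0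
          _ ≤ x ^ α * (2 * ‖v - w‖) := mul_le_mul_of_nonneg_left hx2d hA0
      have t2 : y ^ α * ‖v - w‖ ≤ x ^ α * ‖v - w‖ := mul_le_mul_of_nonneg_right hBA hd0
      calc ‖(x ^ α) • v - (y ^ α) • w‖ ≤ |x ^ α - y ^ α| * x + y ^ α * ‖v - w‖ := hbound
        _ ≤ x ^ α * (2 * ‖v - w‖) + x ^ α * ‖v - w‖ := add_le_add t1 t2
        _ ≤ 8 * ‖v - w‖ * (x ^ α + y ^ α) := by
            nlinarith [mul_nonneg hd0 hA0, mul_nonneg hd0 hB0]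

lemma bvec_lem {α : ℝ} (hα0 : 0 ≤ α) (hα1 : α ≤ 1) (v w : E3) :
    ‖(‖v‖ ^ α) • v - (‖w‖ ^ α) • w‖ ≤ 8 * ‖v - w‖ * (‖v‖ ^ α + ‖w‖ ^ α) := by
  rcases le_total ‖w‖ ‖v‖ with h | h
  · exact bvec_aux hα0 hα1 v w h
  · rw [norm_sub_rev, norm_sub_rev v w, add_comm (‖v‖ ^ α)]
    exact bvec_aux hα0 hα1 w v h

lemma frobNorm_le_sum (A : M3) : frobNorm A ≤ ∑ i, ∑ j, |A i j| := by
  have h1 : frobSq A = ∑ i, ∑ j, (A i j) ^ 2 := by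
    simp [frobSq, Matrix.trace, Matrix.mul_apply, Matrix.diag, Matrix.transpose_apply, sq]
  have h2 : ∑ i, ∑ j, (A i j) ^ 2 ≤ (∑ i, ∑ j, |A i j|) ^ 2 := by
    have h3 := Finset.sum_sq_le_sq_sum_of_nonneg
      (s := (Finset.univ : Finset (Fin 3 × Fin 3))) (f := fun p => |A p.1 p.2|)
      (fun p _ => abs_nonneg _)
    have h4 : ∑ p : Fin 3 × Fin 3, |A p.1 p.2| ^ 2 = ∑ i, ∑ j, (A i j) ^ 2 := by
      rw [Fintype.sum_prod_type]
      simp [sq_abs]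
    have h5 : ∑ p : Fin 3 × Fin 3, |A p.1 p.2| = ∑ i, ∑ j, |A i j| := by
      rw [Fintype.sum_prod_type]
    rw [← h4, ← h5]
    exact h3
  rw [frobNorm, h1]
  have h6 : (0:ℝ) ≤ ∑ i, ∑ j, |A i j| :=
    Finset.sum_nonneg fun i _ => Finset.sum_nonneg fun j _ => abs_nonneg _
  calc Real.sqrt (∑ i, ∑ j, (A i j) ^ 2) ≤ Real.sqrt ((∑ i, ∑ j, |A i j|) ^ 2) :=
        Real.sqrt_le_sqrt h2
    _ = ∑ i, ∑ j, |A i j| := Real.sqrt_sq h6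

lemma sigmat_apply {γ : ℝ} (hγ0 : 0 ≤ γ) (hγ1 : γ ≤ 1) (v : E3) (i j : Fin 3) :
    sigmat γ v i j = ‖v‖ ^ (1 + γ/2) * (if i = j then (1:ℝ) else 0)
      - ‖v‖ ^ (γ/2 - 1) * (v i * v j) := by
  by_cases hv : v = 0
  · subst hv
    rw [sigmat, if_pos rfl]
    have hz : (0:E3) i = 0 := rfl
    rw [Matrix.zero_apply, norm_zero, Real.zero_rpow (by linarith : (1:ℝ) + γ/2 ≠ 0), hz]
    ring
  · rw [sigmat, if_neg hv]
    have hv0 : 0 < ‖v‖ := norm_pos_iff.mpr hv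
    have key : ‖v‖ ^ (1 + γ/2) * (‖v‖ ^ 2)⁻¹ = ‖v‖ ^ (γ/2 - 1) := by
      rw [show (‖v‖:ℝ) ^ (2:ℕ) = ‖v‖ ^ ((2:ℕ):ℝ) from (Real.rpow_natCast _ 2).symm,
        ← Real.rpow_neg hv0.le, ← Real.rpow_add hv0]
      congr 1
      push_cast
      ring
    simp only [proj3, Matrix.smul_apply, Matrix.sub_apply, Matrix.one_apply,
      Matrix.smul_apply, Matrix.vecMulVec_apply, smul_eq_mul]
    rw [mul_sub]
    congr 1
    rw [← mul_assoc, key]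

lemma amat_apply {γ : ℝ} (hγ0 : 0 ≤ γ) (hγ1 : γ ≤ 1) (v : E3) (i j : Fin 3) :
    amat γ v i j = ‖v‖ ^ (2 + γ) * (if i = j then (1:ℝ) else 0)
      - ‖v‖ ^ γ * (v i * v j) := by
  by_cases hv : v = 0
  · subst hv
    rw [amat, if_pos rfl]
    have hz : (0:E3) i = 0 := rfl
    rw [Matrix.zero_apply, norm_zero, Real.zero_rpow (by linarith : (2:ℝ) + γ ≠ 0), hz]
    ring
  · rw [amat, if_neg hv]
    have hv0 : 0 < ‖v‖ := norm_pos_iff.mpr hv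
    have key : ‖v‖ ^ (2 + γ) * (‖v‖ ^ 2)⁻¹ = ‖v‖ ^ γ := by
      rw [show (‖v‖:ℝ) ^ (2:ℕ) = ‖v‖ ^ ((2:ℕ):ℝ) from (Real.rpow_natCast _ 2).symm,
        ← Real.rpow_neg hv0.le, ← Real.rpow_add hv0]
      congr 1
      push_cast
      ring
    simp only [proj3, Matrix.smul_apply, Matrix.sub_apply, Matrix.one_apply,
      Matrix.smul_apply, Matrix.vecMulVec_apply, smul_eq_mul]
    rw [mul_sub]
    congr 1
    rw [← mul_assoc, key]

lemma entry_bound {β p q : ℝ} (hβ0 : 0 ≤ β) (hβ2 : β ≤ 2) (hp : p = 1 + β) (hq : q = β - 1)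
    (v w : E3) (i j : Fin 3) :
    |(‖v‖ ^ p * (if i = j then (1:ℝ) else 0) - ‖v‖ ^ q * (v i * v j))
      - (‖w‖ ^ p * (if i = j then (1:ℝ) else 0) - ‖w‖ ^ q * (w i * w j))|
      ≤ 11 * ‖v - w‖ * (‖v‖ ^ β + ‖w‖ ^ β) := by
  subst hp hq
  set x := ‖v‖
  set y := ‖w‖
  have hdiag := abs_diff_rpow_le hβ0 hβ2 (norm_nonneg v) (norm_nonneg w)
  have hoff := offdiag_lem (α := β - 1) (by linarith) (by linarith) (by ring) v w i j
  have h1 : |x - y| ≤ ‖v - w‖ := abs_norm_sub_norm_le v w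
  have hd0 : (0:ℝ) ≤ ‖v - w‖ := norm_nonneg _
  have hS0 : (0:ℝ) ≤ x ^ β + y ^ β :=
    add_nonneg (Real.rpow_nonneg (norm_nonneg v) _) (Real.rpow_nonneg (norm_nonneg w) _)
  set δ : ℝ := if i = j then 1 else 0 with hδdef
  have hδ : |δ| ≤ 1 := by
    rw [hδdef]; split_ifs <;> simp
  have hsplit : (x ^ (1+β) * δ - x ^ (β-1) * (v i * v j))
      - (y ^ (1+β) * δ - y ^ (β-1) * (w i * w j)) =
      (x ^ (1+β) - y ^ (1+β)) * δ
        + (y ^ (β-1) * (w i * w j) - x ^ (β-1) * (v i * v j)) := by ring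
  calc |(x ^ (1+β) * δ - x ^ (β-1) * (v i * v j))
      - (y ^ (1+β) * δ - y ^ (β-1) * (w i * w j))|
      = |(x ^ (1+β) - y ^ (1+β)) * δ
        + (y ^ (β-1) * (w i * w j) - x ^ (β-1) * (v i * v j))| := by rw [hsplit]
    _ ≤ |(x ^ (1+β) - y ^ (1+β)) * δ|
        + |y ^ (β-1) * (w i * w j) - x ^ (β-1) * (v i * v j)| := abs_add_le _ _
    _ ≤ |x ^ (1+β) - y ^ (1+β)| * 1
        + |x ^ (β-1) * (v i * v j) - y ^ (β-1) * (w i * w j)| := by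
        rw [abs_mul, abs_sub_comm (y ^ (β-1) * (w i * w j))]
        exact add_le_add (mul_le_mul_of_nonneg_left hδ (abs_nonneg _)) le_rfl
    _ ≤ 3 * |x - y| * (x ^ β + y ^ β) + 8 * ‖v - w‖ * (x ^ β + y ^ β) := by
        rw [mul_one]
        exact add_le_add hdiag hoff
    _ ≤ 11 * ‖v - w‖ * (x ^ β + y ^ β) := by
        nlinarith [mul_le_mul_of_nonneg_right h1 hS0]

theorem coefficients_locally_lipschitz (γ : ℝ) (hγ : γ ∈ Set.Icc (0:ℝ) 1) :
    ∃ C : ℝ, 0 < C ∧ ∀ v w : E3,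
      ‖bvec γ v - bvec γ w‖ ≤ C * ‖v - w‖ * (‖v‖ ^ γ + ‖w‖ ^ γ) ∧
      frobNorm (sigmat γ v - sigmat γ w) ≤ C * ‖v - w‖ * (‖v‖ ^ (γ / 2) + ‖w‖ ^ (γ / 2)) ∧
      frobNorm (amat γ v - amat γ w) ≤ C * ‖v - w‖ * (‖v‖ ^ (1 + γ) + ‖w‖ ^ (1 + γ)) := by
  obtain ⟨hγ0, hγ1⟩ := hγ
  refine ⟨100, by norm_num, fun v w => ?_⟩
  have hd0 : (0:ℝ) ≤ ‖v - w‖ := norm_nonneg _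
  refine ⟨?_, ?_, ?_⟩
  · -- bvec
    have hS0 : (0:ℝ) ≤ ‖v‖ ^ γ + ‖w‖ ^ γ :=
      add_nonneg (Real.rpow_nonneg (norm_nonneg v) _) (Real.rpow_nonneg (norm_nonneg w) _)
    have hsplit : bvec γ v - bvec γ w =
        (-2:ℝ) • ((‖v‖ ^ γ) • v - (‖w‖ ^ γ) • w) := by
      simp only [bvec]
      module
    have hb := bvec_lem hγ0 hγ1 v w
    calc ‖bvec γ v - bvec γ w‖ = 2 * ‖(‖v‖ ^ γ) • v - (‖w‖ ^ γ) • w‖ := by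
          rw [hsplit, norm_smul, Real.norm_eq_abs]
          norm_num
      _ ≤ 2 * (8 * ‖v - w‖ * (‖v‖ ^ γ + ‖w‖ ^ γ)) := by linarith
      _ ≤ 100 * ‖v - w‖ * (‖v‖ ^ γ + ‖w‖ ^ γ) := by nlinarith [mul_nonneg hd0 hS0]
  · -- sigma
    have hS0 : (0:ℝ) ≤ ‖v‖ ^ (γ/2) + ‖w‖ ^ (γ/2) :=
      add_nonneg (Real.rpow_nonneg (norm_nonneg v) _) (Real.rpow_nonneg (norm_nonneg w) _)
    have hentry : ∀ i j : Fin 3, |(sigmat γ v - sigmat γ w) i j| ≤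
        11 * ‖v - w‖ * (‖v‖ ^ (γ/2) + ‖w‖ ^ (γ/2)) := by
      intro i j
      rw [Matrix.sub_apply, sigmat_apply hγ0 hγ1, sigmat_apply hγ0 hγ1]
      exact entry_bound (β := γ/2) (by linarith) (by linarith) rfl rfl v w i j
    calc frobNorm (sigmat γ v - sigmat γ w) ≤ ∑ i, ∑ j, |(sigmat γ v - sigmat γ w) i j| :=
          frobNorm_le_sum _
      _ ≤ ∑ _i : Fin 3, ∑ _j : Fin 3, 11 * ‖v - w‖ * (‖v‖ ^ (γ/2) + ‖w‖ ^ (γ/2)) :=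
          Finset.sum_le_sum fun i _ => Finset.sum_le_sum fun j _ => hentry i j
      _ = 99 * ‖v - w‖ * (‖v‖ ^ (γ/2) + ‖w‖ ^ (γ/2)) := by
          simp [Finset.sum_const]
          ring
      _ ≤ 100 * ‖v - w‖ * (‖v‖ ^ (γ/2) + ‖w‖ ^ (γ/2)) := by
          nlinarith [mul_nonneg hd0 hS0]
  · -- amat
    have hS0 : (0:ℝ) ≤ ‖v‖ ^ (1+γ) + ‖w‖ ^ (1+γ) :=
      add_nonneg (Real.rpow_nonneg (norm_nonneg v) _) (Real.rpow_nonneg (norm_nonneg w) _)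
    have hentry : ∀ i j : Fin 3, |(amat γ v - amat γ w) i j| ≤
        11 * ‖v - w‖ * (‖v‖ ^ (1+γ) + ‖w‖ ^ (1+γ)) := by
      intro i j
      rw [Matrix.sub_apply, amat_apply hγ0 hγ1, amat_apply hγ0 hγ1]
      exact entry_bound (β := 1+γ) (by linarith) (by linarith) (by ring) (by ring) v w i j
    calc frobNorm (amat γ v - amat γ w) ≤ ∑ i, ∑ j, |(amat γ v - amat γ w) i j| :=
          frobNorm_le_sum _
      _ ≤ ∑ _i : Fin 3, ∑ _j : Fin 3, 11 * ‖v - w‖ * (‖v‖ ^ (1+γ) + ‖w‖ ^ (1+γ)) :=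
          Finset.sum_le_sum fun i _ => Finset.sum_le_sum fun j _ => hentry i j
      _ = 99 * ‖v - w‖ * (‖v‖ ^ (1+γ) + ‖w‖ ^ (1+γ)) := by
          simp [Finset.sum_const]
          ring
      _ ≤ 100 * ‖v - w‖ * (‖v‖ ^ (1+γ) + ‖w‖ ^ (1+γ)) := by
          nlinarith [mul_nonneg hd0 hS0]
end
end
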